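/- If A and B are short linear orders, A' ⊴ A and B' ⊴ B with A' and B' nonempty, then A' × B' ⊴ A × B, where products carry the lexicographic order. -/

import Mathlib

/-- A linear order is short if neither `ω₁` nor `ω₁*` embeds into it. -/
def IsShort (L : Type*) [LinearOrder L] : Prop :=
  (¬ ∃ f : {o : Ordinal.{0} // o < (Cardinal.aleph 1).ord} → L, StrictMono f) ∧
  (¬ ∃ f : {o : Ordinal.{0} // o < (Cardinal.aleph 1).ord} → L, StrictAnti f)

private abbrev Om1 : Type 1 := {o : Ordinal.{0} // o < (Cardinal.aleph 1).ord}

section Aux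

variable {L : Type*} [LinearOrder L]

private lemma exists_monotone_cofinal [Nonempty L]
    (h : ¬ ∃ f : Om1 → L, StrictMono f) :
    ∃ u : ℕ → L, Monotone u ∧ ∀ x, ∃ n, x ≤ u n := by
  by_contra hc
  push_neg at hc
  classical
  have key : ∀ s : Set L, s.Countable → ∃ x, ∀ y ∈ s, y < x := by
    intro s hs
    rcases s.eq_empty_or_nonempty with rfl | hne
    · exact ⟨Classical.arbitrary L, by simp⟩
    obtain ⟨t, rfl⟩ := hs.exists_eq_range hne
    set u : ℕ → L := fun n => Finset.sup' (Finset.range (n + 1)) (by simp) t with hud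
    have hum : Monotone u := by
      intro m n hmn
      exact Finset.sup'_mono t (Finset.range_subset_range.mpr (by omega)) (by simp)
    obtain ⟨x, hx⟩ := hc u hum
    refine ⟨x, ?_⟩
    rintro y ⟨m, rfl⟩
    have h1 : t m ≤ u m := Finset.le_sup' t (by simp : m ∈ Finset.range (m + 1))
    exact lt_of_le_of_lt h1 (hx m)
  let F : ∀ o : Ordinal.{0}, (∀ o', o' < o → L) → L := fun o ih =>
    if hco : (Set.range fun p : {o' // o' < o} => ih p.1 p.2).Countable then
      (key _ hco).choose else Classical.arbitrary L
  let G : Ordinal.{0} → L := WellFounded.fix Ordinal.lt_wf F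
  have hG : ∀ o, G o = F o (fun o' _ => G o') := fun o => WellFounded.fix_eq _ _ o
  have hmono : ∀ o₂ : Ordinal.{0}, o₂ < (Cardinal.aleph 1).ord →
      ∀ o₁, o₁ < o₂ → G o₁ < G o₂ := by
    intro o₂ ho₂ o₁ h12
    have hcnt : (Set.range fun p : {o' // o' < o₂} => G p.1).Countable := by
      have hco : Countable {o' : Ordinal.{0} // o' < o₂} := by
        rw [← Cardinal.mk_le_aleph0_iff]
        have h1 : Cardinal.mk {o' : Ordinal.{0} // o' < o₂} = Cardinal.lift.{1} o₂.card :=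
          Ordinal.mk_Iio_ordinal o₂
        rw [h1]
        have h2 : o₂.card < Cardinal.aleph 1 := Cardinal.lt_ord.mp ho₂
        have h3 : o₂.card ≤ Cardinal.aleph0 := by
          rwa [← Cardinal.succ_aleph0, Order.lt_succ_iff] at h2
        calc Cardinal.lift.{1} o₂.card ≤ Cardinal.lift.{1} Cardinal.aleph0 :=
              Cardinal.lift_le.mpr h3
          _ = Cardinal.aleph0 := Cardinal.lift_aleph0
      exact Set.countable_range _
    have hval : G o₂ = (key _ hcnt).choose := by
      rw [hG o₂]
      simp only [F]
      rw [dif_pos hcnt]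
    rw [hval]
    exact (key _ hcnt).choose_spec (G o₁) ⟨⟨o₁, h12⟩, rfl⟩
  exact h ⟨fun o => G o.1, fun a b hab => hmono b.1 b.2 a.1 (Subtype.coe_lt_coe.mpr hab)⟩

private lemma exists_antitone_coinitial [Nonempty L]
    (h : ¬ ∃ f : Om1 → L, StrictAnti f) :
    ∃ u : ℕ → L, Antitone u ∧ ∀ x, ∃ n, u n ≤ x := by
  have h' : ¬ ∃ f : Om1 → Lᵒᵈ, StrictMono f := by
    rintro ⟨f, hf⟩
    exact h ⟨fun o => OrderDual.ofDual (f o), fun a b hab => hf hab⟩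
  obtain ⟨u, hu, hcof⟩ := exists_monotone_cofinal (L := Lᵒᵈ) h'
  exact ⟨fun n => OrderDual.ofDual (u n), fun m n hmn => hu hmn,
    fun x => hcof (OrderDual.toDual x)⟩

private lemma noSM_of_surj {A A' : Type*} [LinearOrder A] [LinearOrder A'] {f : A → A'}
    (hf : Monotone f) (hfs : Function.Surjective f)
    (h : ¬ ∃ u : Om1 → A, StrictMono u) : ¬ ∃ u : Om1 → A', StrictMono u := by
  rintro ⟨u, hu⟩
  refine h ⟨fun o => (hfs (u o)).choose, fun a b hab => ?_⟩
  by_contra hle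
  push_neg at hle
  have h2 := hf hle
  rw [(hfs (u b)).choose_spec, (hfs (u a)).choose_spec] at h2
  exact absurd h2 (not_le.mpr (hu hab))

private lemma noSA_of_surj {A A' : Type*} [LinearOrder A] [LinearOrder A'] {f : A → A'}
    (hf : Monotone f) (hfs : Function.Surjective f)
    (h : ¬ ∃ u : Om1 → A, StrictAnti u) : ¬ ∃ u : Om1 → A', StrictAnti u := by
  rintro ⟨u, hu⟩
  refine h ⟨fun o => (hfs (u o)).choose, fun a b hab => ?_⟩
  by_contra hle
  push_neg at hle
  have h2 := hf hle
  rw [(hfs (u a)).choose_spec, (hfs (u b)).choose_spec] at h2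
  exact absurd h2 (not_le.mpr (hu hab))

private lemma noSM_subtype (p : L → Prop)
    (h : ¬ ∃ u : Om1 → L, StrictMono u) : ¬ ∃ u : Om1 → Subtype p, StrictMono u := by
  rintro ⟨u, hu⟩
  exact h ⟨fun o => (u o).1, fun a b hab => Subtype.coe_lt_coe.mpr (hu hab)⟩

private lemma noSA_subtype (p : L → Prop)
    (h : ¬ ∃ u : Om1 → L, StrictAnti u) : ¬ ∃ u : Om1 → Subtype p, StrictAnti u := by
  rintro ⟨u, hu⟩
  exact h ⟨fun o => (u o).1, fun a b hab => Subtype.coe_lt_coe.mpr (hu hab)⟩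

private lemma mkZseq (u v : ℕ → L) (hu : Monotone u) (hv : Antitone v)
    (hcof : ∀ x, ∃ n, x ≤ u n) (hcoi : ∀ x, ∃ n, v n ≤ x) :
    ∃ e : ℤ → L, Monotone e ∧ (∀ x, ∃ n, x ≤ e n) ∧ (∀ x, ∃ n, e n ≤ x) := by
  refine ⟨fun n => if 0 ≤ n then u n.toNat else min (v (-n).toNat) (u 0), ?_, ?_, ?_⟩
  · intro m n hmn
    dsimp only
    split_ifs with hm hn hn
    · exact hu (Int.toNat_le_toNat hmn)
    · exact absurd (hm.trans hmn) hn
    · exact (min_le_right _ _).trans (hu (Nat.zero_le _))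
    · exact min_le_min (hv (by omega : (-n).toNat ≤ (-m).toNat)) le_rfl
  · intro x
    obtain ⟨n, hn⟩ := hcof x
    exact ⟨(n : ℤ), by simpa using hn⟩
  · intro x
    obtain ⟨n, hn⟩ := hcoi x
    refine ⟨-((n : ℤ) + 1), ?_⟩
    dsimp only
    rw [if_neg (by omega : ¬ (0:ℤ) ≤ -((n : ℤ) + 1))]
    have h1 : (-(-((n : ℤ) + 1))).toNat = n + 1 := by omega
    rw [h1]
    exact (min_le_left _ _).trans ((hv (Nat.le_succ n)).trans hn)

private lemma core {I C : Type*} [LinearOrder I] [LinearOrder C]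
    (ι : ℤ → I) (hι : Monotone ι) (hιcof : ∀ i, ∃ n, i ≤ ι n) (hιcoi : ∀ i, ∃ n, ι n ≤ i)
    (e : ℤ → C) (he : Monotone e) (hecof : ∀ c, ∃ n, c ≤ e n) (hecoi : ∀ c, ∃ n, e n ≤ c) :
    ∃ ψ : I ×ₗ C → C, Monotone ψ ∧ Function.Surjective ψ := by
  classical
  have loSpec : ∀ i : I, (∃ n, ι n < i) → ∃ m : ℤ, ι m < i ∧ ∀ n, ι n < i → n ≤ m := by
    intro i hex
    obtain ⟨N, hN⟩ := hιcof i
    refine Int.exists_greatest_of_bdd ⟨N, fun z hz => ?_⟩ hex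
    by_contra hzN
    push_neg at hzN
    exact absurd (lt_of_le_of_lt (hN.trans (hι hzN.le)) hz) (lt_irrefl i)
  have hiSpec : ∀ i : I, (∃ n, i < ι n) → ∃ m : ℤ, ι m ≤ i ∧ ∀ n, ι n ≤ i → n ≤ m := by
    intro i hex
    obtain ⟨N, hN⟩ := hex
    obtain ⟨M, hM⟩ := hιcoi i
    refine Int.exists_greatest_of_bdd ⟨N, fun z hz => ?_⟩ ⟨M, hM⟩
    by_contra hzN
    push_neg at hzN
    exact absurd ((hι hzN.le).trans hz) (not_le.mpr hN)
  choose lo hlo1 hlo2 using loSpec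
  choose hi hhi1 hhi2 using hiSpec
  set inn : I → C → C := fun i b => if h1 : ∃ n, ι n < i then max (e (lo i h1)) b else b
    with hinn
  set ψf : I → C → C := fun i b =>
    if h2 : ∃ n, i < ι n then min (e (hi i h2)) (inn i b) else inn i b with hψf
  have inn_mono : ∀ i, Monotone (inn i) := by
    intro i b b' hbb'
    simp only [hinn]
    split_ifs with h1
    · exact max_le_max le_rfl hbb'
    · exact hbb'
  have ψf_mono : ∀ i, Monotone (ψf i) := by
    intro i b b' hbb'
    simp only [hψf]
    split_ifs with h2
    · exact min_le_min le_rfl (inn_mono i hbb')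
    · exact inn_mono i hbb'
  have inn_ge : ∀ i b (h1 : ∃ n, ι n < i), e (lo i h1) ≤ inn i b := by
    intro i b h1
    simp only [hinn]
    rw [dif_pos h1]
    exact le_max_left _ _
  have ψf_le : ∀ i b (h2 : ∃ n, i < ι n), ψf i b ≤ e (hi i h2) := by
    intro i b h2
    simp only [hψf]
    rw [dif_pos h2]
    exact min_le_left _ _
  have ψf_ge : ∀ i b (h1 : ∃ n, ι n < i), e (lo i h1) ≤ ψf i b := by
    intro i b h1
    simp only [hψf]
    split_ifs with h2
    · exact le_min (he (hhi2 i h2 _ (hlo1 i h1).le)) (inn_ge i b h1)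
    · exact inn_ge i b h1
  have cross : ∀ i i', i < i' → ∀ b b', ψf i b ≤ ψf i' b' := by
    intro i i' hii' b b'
    have h2 : ∃ n, i < ι n := by
      obtain ⟨N, hN⟩ := hιcof i'
      exact ⟨N, lt_of_lt_of_le hii' hN⟩
    have h1' : ∃ n, ι n < i' := by
      obtain ⟨N, hN⟩ := hιcoi i
      exact ⟨N, lt_of_le_of_lt hN hii'⟩
    refine (ψf_le i b h2).trans (le_trans (he ?_) (ψf_ge i' b' h1'))
    exact hlo2 i' h1' _ (lt_of_le_of_lt (hhi1 i h2) hii')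
  have exk : ∀ c : C, ∃ k : ℤ, e (k - 1) ≤ c ∧ c ≤ e k := by
    intro c
    by_cases hb : ∃ n, e n < c
    · obtain ⟨m, hm⟩ := hb
      obtain ⟨k, hk1, hk2⟩ := Int.exists_least_of_bdd (P := fun n => c ≤ e n)
        ⟨m, fun z hz => by
          by_contra hzm
          push_neg at hzm
          exact absurd (hz.trans (he hzm.le)) (not_le.mpr hm)⟩ (hecof c)
      refine ⟨k, ?_, hk1⟩
      by_contra hlt
      push_neg at hlt
      exact absurd (hk2 (k - 1) hlt.le) (by omega)
    · push_neg at hb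
      obtain ⟨m, hm⟩ := hecoi c
      exact ⟨m, (he (by omega : m - 1 ≤ m)).trans hm, hb m⟩
  refine ⟨fun p => ψf (ofLex p).1 (ofLex p).2, ?_, ?_⟩
  · intro p q hpq
    rcases (Prod.Lex.le_iff (x := p) (y := q)).mp hpq with h | ⟨h1, h2⟩
    · exact cross _ _ h _ _
    · dsimp only
      rw [h1]
      exact ψf_mono _ h2
  · intro c
    obtain ⟨k, hk1, hk2⟩ := exk c
    refine ⟨toLex (ι k, c), ?_⟩
    show ψf (ι k) c = c
    have hinnval : inn (ι k) c = c := by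
      simp only [hinn]
      split_ifs with h1
      · refine max_eq_right ?_
        have hlt : ι (lo (ι k) h1) < ι k := hlo1 _ h1
        have hle : lo (ι k) h1 ≤ k - 1 := by
          by_contra hh
          push_neg at hh
          exact absurd (hι (by omega : k ≤ lo (ι k) h1)) (not_le.mpr hlt)
        exact (he hle).trans hk1
      · rfl
    simp only [hψf, hinnval]
    split_ifs with h2
    · refine min_eq_right ?_
      exact hk2.trans (he (hhi2 _ h2 k le_rfl))
    · rfl

private lemma fiber_lemma {I C : Type*} [LinearOrder I] [LinearOrder C]
    [Nonempty I] [Nonempty C]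
    (hI1 : ¬ ∃ u : Om1 → I, StrictMono u) (hI2 : ¬ ∃ u : Om1 → I, StrictAnti u)
    (hC1 : ¬ ∃ u : Om1 → C, StrictMono u) (hC2 : ¬ ∃ u : Om1 → C, StrictAnti u) :
    ∃ ψ : I ×ₗ C → C, Monotone ψ ∧ Function.Surjective ψ := by
  obtain ⟨u, hu, hucof⟩ := exists_monotone_cofinal hI1
  obtain ⟨v, hv, hvcoi⟩ := exists_antitone_coinitial hI2
  obtain ⟨ι, hι, hιcof, hιcoi⟩ := mkZseq u v hu hv hucof hvcoi
  obtain ⟨cc, hcc, hcccof⟩ := exists_monotone_cofinal hC1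
  obtain ⟨d, hd, hdcoi⟩ := exists_antitone_coinitial hC2
  obtain ⟨e, he, hecof, hecoi⟩ := mkZseq cc d hcc hd hcccof hdcoi
  exact core ι hι hιcof hιcoi e he hecof hecoi

end Aux

/-- If `A` and `B` are short linear orders, and `A'`, `B'` are nonempty epimorphic images
of `A`, `B` respectively, then the lexicographic product `A' ×ₗ B'` is an epimorphic image
of `A ×ₗ B`. -/
theorem epi_lex_prod {A B A' B' : Type*} [LinearOrder A] [LinearOrder B]
    [LinearOrder A'] [LinearOrder B'] [Nonempty A'] [Nonempty B']
    (hA : IsShort A) (hB : IsShort B)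
    (f : A → A') (hf : Monotone f) (hfs : Function.Surjective f)
    (g : B → B') (hg : Monotone g) (hgs : Function.Surjective g) :
    ∃ h : A ×ₗ B → A' ×ₗ B', Monotone h ∧ Function.Surjective h := by
  obtain ⟨hA1, hA2⟩ := hA
  obtain ⟨hB1, hB2⟩ := hB
  have hB'1 : ¬ ∃ u : Om1 → B', StrictMono u := noSM_of_surj hg hgs hB1
  have hB'2 : ¬ ∃ u : Om1 → B', StrictAnti u := noSA_of_surj hg hgs hB2
  have fib : ∀ a' : A', ∃ ψ : {a // f a = a'} ×ₗ B' → B',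
      Monotone ψ ∧ Function.Surjective ψ := by
    intro a'
    haveI : Nonempty {a // f a = a'} := ⟨⟨(hfs a').choose, (hfs a').choose_spec⟩⟩
    exact fiber_lemma (noSM_subtype _ hA1) (noSA_subtype _ hA2) hB'1 hB'2
  choose Φ hΦm hΦs using fib
  have Φcongr : ∀ (a₁ a₂ : A') (h : a₁ = a₂) (y : A) (h1 : f y = a₁) (h2 : f y = a₂)
      (c : B'), Φ a₁ (toLex (⟨y, h1⟩, c)) = Φ a₂ (toLex (⟨y, h2⟩, c)) := by
    rintro a₁ a₂ rfl y h1 h2 c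
    rfl
  refine ⟨fun p => toLex (f (ofLex p).1,
    Φ (f (ofLex p).1) (toLex (⟨(ofLex p).1, rfl⟩, g (ofLex p).2))), ?_, ?_⟩
  · intro p q hpq
    rcases (Prod.Lex.le_iff (x := p) (y := q)).mp hpq with h | ⟨h1, h2⟩
    · rcases lt_or_eq_of_le (hf h.le) with hlt | heq
      · exact Prod.Lex.le_iff.mpr (Or.inl hlt)
      · refine Prod.Lex.le_iff.mpr (Or.inr ⟨heq, ?_⟩)
        dsimp only
        rw [Φcongr (f (ofLex q).1) (f (ofLex p).1) heq.symm (ofLex q).1 rfl heq.symm]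
        refine hΦm (f (ofLex p).1) ?_
        exact Prod.Lex.le_iff.mpr (Or.inl (Subtype.mk_lt_mk.mpr h))
    · refine Prod.Lex.le_iff.mpr (Or.inr ⟨congrArg f h1, ?_⟩)
      have e2 : f (ofLex q).1 = f (ofLex p).1 := (congrArg f h1).symm
      dsimp only
      rw [Φcongr (f (ofLex q).1) (f (ofLex p).1) e2 (ofLex q).1 rfl e2]
      refine hΦm (f (ofLex p).1) ?_
      exact Prod.Lex.le_iff.mpr (Or.inr ⟨Subtype.ext h1, hg h2⟩)
  · intro y
    obtain ⟨x, hx⟩ := hΦs (ofLex y).1 (ofLex y).2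
    rcases hofx : ofLex x with ⟨⟨a, ha⟩, c⟩
    obtain ⟨b, hb⟩ := hgs c
    refine ⟨toLex (a, b), ?_⟩
    show toLex (f a, Φ (f a) (toLex (⟨a, rfl⟩, g b))) = y
    have e1 : Φ (f a) (toLex (⟨a, rfl⟩, g b)) = Φ (ofLex y).1 (toLex (⟨a, ha⟩, c)) := by
      rw [hb]
      exact Φcongr (f a) ((ofLex y).1) ha a rfl ha c
    have e2 : toLex ((⟨a, ha⟩ : {a // f a = (ofLex y).1}), c) = x := by
      rw [← hofx]
      exact toLex_ofLex x
    rw [e1, ha, e2, hx]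
    rfl
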